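/- arXiv:1503.06843 — 2 statements merged into one kernel-verified Lean document; each statement's English description precedes it below -/
import Mathlib

section
/- The function u : ℝ³ → ℝ defined by u(x, y, t) = (x² + y²)eᵗ + (1/4)e^{−t} − eᵗ satisfies σ₂(D²u(x, y, t)) = 1 for every (x, y, t) ∈ ℝ³. -/
/-- The `k`-th elementary symmetric function of a square real matrix:
the sum of its `k × k` principal minors. -/
noncomputable def sigmaK {ι : Type*} [Fintype ι] [DecidableEq ι] (k : ℕ)
    (A : Matrix ι ι ℝ) : ℝ :=
  ∑ s ∈ (Finset.univ : Finset ι).powersetCard k,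
    Matrix.det (fun i j : {x : ι // x ∈ s} => A i.1 j.1)

/-- The Hessian matrix of `u` at `x`, with entries `∂ᵢ∂ⱼ u (x)`. -/
noncomputable def hessian {ι : Type*} [Fintype ι] [DecidableEq ι]
    (u : (ι → ℝ) → ℝ) (x : ι → ℝ) : Matrix ι ι ℝ :=
  fun i j => fderiv ℝ (fun y => fderiv ℝ u y (Pi.single j 1)) x (Pi.single i 1)

lemma det_pair {ι : Type*} [DecidableEq ι] (A : Matrix ι ι ℝ) (a b : ι) (hab : a ≠ b) :
    Matrix.det (fun i j : {x : ι // x ∈ ({a, b} : Finset ι)} => A i.1 j.1)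
      = A a a * A b b - A a b * A b a := by
  let e : Fin 2 → {x : ι // x ∈ ({a, b} : Finset ι)} := ![⟨a, by simp⟩, ⟨b, by simp⟩]
  have he : Function.Bijective e := by
    constructor
    · intro i j hij
      fin_cases i <;> fin_cases j <;> simp_all [e]
    · rintro ⟨x, hx⟩
      simp only [Finset.mem_insert, Finset.mem_singleton] at hx
      rcases hx with rfl | rfl
      · exact ⟨0, rfl⟩
      · exact ⟨1, rfl⟩
  let E := Equiv.ofBijective e he
  show Matrix.det (Matrix.of fun i j : {x : ι // x ∈ ({a, b} : Finset ι)} => A i.1 j.1) = _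
  rw [← Matrix.det_submatrix_equiv_self E, Matrix.det_fin_two]
  simp [Matrix.submatrix, E, e, Equiv.ofBijective]

lemma sigmaK_two (A : Matrix (Fin 3) (Fin 3) ℝ) :
    sigmaK 2 A = (A 0 0 * A 1 1 - A 0 1 * A 1 0)
      + (A 0 0 * A 2 2 - A 0 2 * A 2 0)
      + (A 1 1 * A 2 2 - A 1 2 * A 2 1) := by
  have hps : (Finset.univ : Finset (Fin 3)).powersetCard 2
      = {({0,1} : Finset (Fin 3)), {0,2}, {1,2}} := by decide
  rw [sigmaK, hps, Finset.sum_insert (by decide), Finset.sum_insert (by decide),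
    Finset.sum_singleton, det_pair A 0 1 (by decide), det_pair A 0 2 (by decide),
    det_pair A 1 2 (by decide)]
  ring

noncomputable def Pr (i : Fin 3) : (Fin 3 → ℝ) →L[ℝ] ℝ := ContinuousLinearMap.proj i

lemma hasFDerivAt_pr (i : Fin 3) (v : Fin 3 → ℝ) :
    HasFDerivAt (fun w : Fin 3 → ℝ => w i) (Pr i) v := (Pr i).hasFDerivAt

lemma hasFDerivAt_expc (v : Fin 3 → ℝ) :
    HasFDerivAt (fun w : Fin 3 → ℝ => Real.exp (w 2)) (Real.exp (v 2) • Pr 2) v :=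
  by have := (Real.hasDerivAt_exp (v 2)).comp_hasFDerivAt v (hasFDerivAt_pr 2 v); exact this

lemma hasFDerivAt_expnc (v : Fin 3 → ℝ) :
    HasFDerivAt (fun w : Fin 3 → ℝ => Real.exp (-(w 2)))
      (-(Real.exp (-(v 2)) • Pr 2)) v := by
  have h1 : HasFDerivAt (fun w : Fin 3 → ℝ => -(w 2)) (-(Pr 2)) v :=
    (hasFDerivAt_pr 2 v).neg
  have := (Real.hasDerivAt_exp (-(v 2))).comp_hasFDerivAt v h1
  simpa [Function.comp_def, smul_neg, neg_smul] using this

/-- gradient of u as a continuous linear map -/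
noncomputable def gradU (v : Fin 3 → ℝ) : (Fin 3 → ℝ) →L[ℝ] ℝ :=
  (2 * v 0 * Real.exp (v 2)) • Pr 0 + (2 * v 1 * Real.exp (v 2)) • Pr 1
    + ((v 0 ^ 2 + v 1 ^ 2) * Real.exp (v 2) - (1/4) * Real.exp (-(v 2))
        - Real.exp (v 2)) • Pr 2

lemma hasFDerivAt_u (v : Fin 3 → ℝ) :
    HasFDerivAt (fun w : Fin 3 → ℝ => (w 0 ^ 2 + w 1 ^ 2) * Real.exp (w 2)
      + (1 / 4) * Real.exp (-(w 2)) - Real.exp (w 2)) (gradU v) v := by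
  have hsq : HasFDerivAt (fun w : Fin 3 → ℝ => w 0 ^ 2 + w 1 ^ 2)
      ((v 0 • Pr 0 + v 0 • Pr 0) + (v 1 • Pr 1 + v 1 • Pr 1)) v := by
    have := ((hasFDerivAt_pr 0 v).mul (hasFDerivAt_pr 0 v)).add
      ((hasFDerivAt_pr 1 v).mul (hasFDerivAt_pr 1 v))
    exact this.congr_of_eventuallyEq (Filter.Eventually.of_forall fun w => by simp [pow_two])
  have H := ((hsq.mul (hasFDerivAt_expc v)).add
    ((hasFDerivAt_const (1/4 : ℝ) v).mul (hasFDerivAt_expnc v))).sub (hasFDerivAt_expc v)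
  replace H := H.congr_of_eventuallyEq (f₁ := fun w : Fin 3 → ℝ => (w 0 ^ 2 + w 1 ^ 2) * Real.exp (w 2) + (1 / 4) * Real.exp (-(w 2)) - Real.exp (w 2))
    (Filter.Eventually.of_forall fun w => rfl)
  refine H.congr_fderiv ?_
  ext w
  simp [gradU, Pr, ContinuousLinearMap.smul_apply]
  ring

/-- second derivatives: derivative of each gradient component -/
noncomputable def hessRow : Fin 3 → (Fin 3 → ℝ) → ((Fin 3 → ℝ) →L[ℝ] ℝ)
  | 0 => fun v => (2 * Real.exp (v 2)) • Pr 0 + (2 * v 0 * Real.exp (v 2)) • Pr 2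
  | 1 => fun v => (2 * Real.exp (v 2)) • Pr 1 + (2 * v 1 * Real.exp (v 2)) • Pr 2
  | 2 => fun v => (2 * v 0 * Real.exp (v 2)) • Pr 0 + (2 * v 1 * Real.exp (v 2)) • Pr 1
      + ((v 0 ^ 2 + v 1 ^ 2) * Real.exp (v 2) + (1/4) * Real.exp (-(v 2))
          - Real.exp (v 2)) • Pr 2

lemma hasFDerivAt_g0 (v : Fin 3 → ℝ) :
    HasFDerivAt (fun w : Fin 3 → ℝ => 2 * w 0 * Real.exp (w 2)) (hessRow 0 v) v := by
  have H := (((hasFDerivAt_const (2:ℝ) v).mul (hasFDerivAt_pr 0 v)).mul (hasFDerivAt_expc v))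
  replace H := H.congr_of_eventuallyEq (f₁ := fun w : Fin 3 → ℝ => 2 * w 0 * Real.exp (w 2))
    (Filter.Eventually.of_forall fun w => rfl)
  refine H.congr_fderiv ?_
  ext w
  simp [hessRow, Pr, ContinuousLinearMap.smul_apply]
  ring

lemma hasFDerivAt_g1 (v : Fin 3 → ℝ) :
    HasFDerivAt (fun w : Fin 3 → ℝ => 2 * w 1 * Real.exp (w 2)) (hessRow 1 v) v := by
  have H := (((hasFDerivAt_const (2:ℝ) v).mul (hasFDerivAt_pr 1 v)).mul (hasFDerivAt_expc v))
  replace H := H.congr_of_eventuallyEq (f₁ := fun w : Fin 3 → ℝ => 2 * w 1 * Real.exp (w 2))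
    (Filter.Eventually.of_forall fun w => rfl)
  refine H.congr_fderiv ?_
  ext w
  simp [hessRow, Pr, ContinuousLinearMap.smul_apply]
  ring

lemma hasFDerivAt_g2 (v : Fin 3 → ℝ) :
    HasFDerivAt (fun w : Fin 3 → ℝ => (w 0 ^ 2 + w 1 ^ 2) * Real.exp (w 2)
      - (1/4) * Real.exp (-(w 2)) - Real.exp (w 2)) (hessRow 2 v) v := by
  have hsq : HasFDerivAt (fun w : Fin 3 → ℝ => w 0 ^ 2 + w 1 ^ 2)
      ((v 0 • Pr 0 + v 0 • Pr 0) + (v 1 • Pr 1 + v 1 • Pr 1)) v := by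
    have := ((hasFDerivAt_pr 0 v).mul (hasFDerivAt_pr 0 v)).add
      ((hasFDerivAt_pr 1 v).mul (hasFDerivAt_pr 1 v))
    exact this.congr_of_eventuallyEq (Filter.Eventually.of_forall fun w => by simp [pow_two])
  have H := ((hsq.mul (hasFDerivAt_expc v)).sub
    ((hasFDerivAt_const (1/4 : ℝ) v).mul (hasFDerivAt_expnc v))).sub (hasFDerivAt_expc v)
  replace H := H.congr_of_eventuallyEq (f₁ := fun w : Fin 3 → ℝ => (w 0 ^ 2 + w 1 ^ 2) * Real.exp (w 2) - (1/4) * Real.exp (-(w 2)) - Real.exp (w 2))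
    (Filter.Eventually.of_forall fun w => rfl)
  refine H.congr_fderiv ?_
  ext w
  simp [hessRow, Pr, ContinuousLinearMap.smul_apply]
  ring

/-- The function `u(x, y, t) = (x² + y²)eᵗ + (1/4)e^{−t} − eᵗ` satisfies
`σ₂(D²u) = 1` on all of `ℝ³`. -/
theorem explicit_solution_sigma2 (u : (Fin 3 → ℝ) → ℝ)
    (hu : u = fun v => (v 0 ^ 2 + v 1 ^ 2) * Real.exp (v 2)
      + (1 / 4) * Real.exp (-(v 2)) - Real.exp (v 2)) :
    ∀ v, sigmaK 2 (hessian u v) = 1 := by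
  subst hu
  intro v
  have hfd : ∀ w : Fin 3 → ℝ, fderiv ℝ (fun v => (v 0 ^ 2 + v 1 ^ 2) * Real.exp (v 2)
      + (1 / 4) * Real.exp (-(v 2)) - Real.exp (v 2)) w = gradU w :=
    fun w => (hasFDerivAt_u w).fderiv
  have hg0 : (fun y : Fin 3 → ℝ => fderiv ℝ (fun v => (v 0 ^ 2 + v 1 ^ 2) * Real.exp (v 2)
      + (1 / 4) * Real.exp (-(v 2)) - Real.exp (v 2)) y (Pi.single 0 1))
      = fun w : Fin 3 → ℝ => 2 * w 0 * Real.exp (w 2) := by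
    funext w
    rw [hfd w]
    simp [gradU, Pr, Pi.single_apply]
  have hg1 : (fun y : Fin 3 → ℝ => fderiv ℝ (fun v => (v 0 ^ 2 + v 1 ^ 2) * Real.exp (v 2)
      + (1 / 4) * Real.exp (-(v 2)) - Real.exp (v 2)) y (Pi.single 1 1))
      = fun w : Fin 3 → ℝ => 2 * w 1 * Real.exp (w 2) := by
    funext w
    rw [hfd w]
    simp [gradU, Pr, Pi.single_apply]
  have hg2 : (fun y : Fin 3 → ℝ => fderiv ℝ (fun v => (v 0 ^ 2 + v 1 ^ 2) * Real.exp (v 2)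
      + (1 / 4) * Real.exp (-(v 2)) - Real.exp (v 2)) y (Pi.single 2 1))
      = fun w : Fin 3 → ℝ => (w 0 ^ 2 + w 1 ^ 2) * Real.exp (w 2)
          - (1/4) * Real.exp (-(w 2)) - Real.exp (w 2) := by
    funext w
    rw [hfd w]
    simp [gradU, Pr, Pi.single_apply]
  have hA0 : ∀ i : Fin 3, hessian (fun v => (v 0 ^ 2 + v 1 ^ 2) * Real.exp (v 2)
      + (1 / 4) * Real.exp (-(v 2)) - Real.exp (v 2)) v i 0
      = hessRow 0 v (Pi.single i 1) := by
    intro i; unfold hessian; rw [hg0, (hasFDerivAt_g0 v).fderiv]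
  have hA1 : ∀ i : Fin 3, hessian (fun v => (v 0 ^ 2 + v 1 ^ 2) * Real.exp (v 2)
      + (1 / 4) * Real.exp (-(v 2)) - Real.exp (v 2)) v i 1
      = hessRow 1 v (Pi.single i 1) := by
    intro i; unfold hessian; rw [hg1, (hasFDerivAt_g1 v).fderiv]
  have hA2 : ∀ i : Fin 3, hessian (fun v => (v 0 ^ 2 + v 1 ^ 2) * Real.exp (v 2)
      + (1 / 4) * Real.exp (-(v 2)) - Real.exp (v 2)) v i 2
      = hessRow 2 v (Pi.single i 1) := by
    intro i; unfold hessian; rw [hg2, (hasFDerivAt_g2 v).fderiv]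
  rw [sigmaK_two]
  rw [hA0 0, hA1 1, hA1 0, hA0 1, hA2 0, hA0 2, hA2 1, hA1 2, hA2 2]
  have hee : Real.exp (v 2) * Real.exp (-(v 2)) = 1 := by
    rw [← Real.exp_add]; simp
  simp [hessRow, Pr, Pi.single_apply]
  nlinarith [hee, Real.exp_pos (v 2)]
end

section
/- Let n ≥ 3 be odd and set k = (n+1)/2. Define the constants A = 2^{k−1}(C(n−2, k−2) + C(n−2, k−1)) and B = 2^k · C(n−1, k), where C(·,·) denotes the binomial coefficient. Let h : ℝ → ℝ be any twice differentiable function satisfying h''(t) = (1 − B e^{kt}) / (A e^{(k−1)t}) for all t ∈ ℝ. Then the function u : ℝ^{n−1} × ℝ → ℝ defined by u(x, t) = |x|² eᵗ + h(t) satisfies σ_k(D²u(x, t)) = 1 for every (x, t) ∈ ℝ^{n−1} × ℝ. -/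
open Finset Matrix

lemma aux_card_filter_mem {α : Type*} [DecidableEq α] (U : Finset α) (x : α) (hx : x ∈ U)
    (k : ℕ) :
    ((U.powersetCard (k+1)).filter (fun s => x ∈ s)).card = (U.erase x).card.choose k := by
  rw [← Finset.card_powersetCard]
  apply Finset.card_bij (fun s _ => s.erase x)
  · rintro s hs
    simp only [mem_filter, mem_powersetCard] at hs
    rw [mem_powersetCard]
    refine ⟨Finset.erase_subset_erase x hs.1.1, ?_⟩
    rw [Finset.card_erase_of_mem hs.2, hs.1.2]; rfl
  · rintro s hs t ht hst
    simp only [mem_filter] at hs ht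
    rw [← Finset.insert_erase hs.2, ← Finset.insert_erase ht.2, hst]
  · rintro T hT
    rw [mem_powersetCard] at hT
    have hxT : x ∉ T := fun hxT => (Finset.notMem_erase x U) (hT.1 hxT)
    refine ⟨insert x T, ?_, ?_⟩
    · simp only [mem_filter, mem_powersetCard]
      refine ⟨⟨?_, ?_⟩, Finset.mem_insert_self x T⟩
      · intro y hy
        rcases Finset.mem_insert.1 hy with rfl | hy
        · exact hx
        · exact (Finset.erase_subset x U) (hT.1 hy)
      · rw [Finset.card_insert_of_notMem hxT, hT.2]
    · rw [Finset.erase_insert hxT]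

lemma aux_sum_powersetCard {α : Type*} [DecidableEq α] (V : Finset α) (k : ℕ) (f : α → ℝ) :
    ∑ T ∈ V.powersetCard (k+1), ∑ x ∈ T, f x
      = ((V.card - 1).choose k) * ∑ x ∈ V, f x := by
  have h1 : ∀ T ∈ V.powersetCard (k+1), ∑ x ∈ T, f x
      = ∑ x ∈ V, if x ∈ T then f x else 0 := by
    intro T hT
    rw [mem_powersetCard] at hT
    rw [Finset.sum_ite_mem, Finset.inter_eq_right.2 hT.1]
  rw [Finset.sum_congr rfl h1, Finset.sum_comm]
  rw [Finset.mul_sum]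
  apply Finset.sum_congr rfl
  intro x hxV
  rw [← Finset.sum_filter, Finset.sum_const, nsmul_eq_mul,
    aux_card_filter_mem V x hxV k, Finset.card_erase_of_mem hxV]
lemma det_arrow {κ : Type*} [Fintype κ] [DecidableEq κ] (p : κ) (a c : ℝ) (ha : a ≠ 0)
    (hcard : 2 ≤ Fintype.card κ) (g : κ → ℝ) (hgp : g p = 0) :
    Matrix.det (Matrix.of fun x y : κ => if x = p then (if y = p then c else g y)
      else if y = p then g x else if x = y then a else 0)
    = a ^ (Fintype.card κ - 1) * c - a ^ (Fintype.card κ - 2) * ∑ x, (g x)^2 := by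
  set M : Matrix κ κ ℝ := Matrix.of fun x y : κ => if x = p then (if y = p then c else g y)
      else if y = p then g x else if x = y then a else 0 with hM
  set q := {x : κ // x = p}
  set r := {x : κ // ¬ x = p}
  haveI : Unique q := ⟨⟨⟨p, rfl⟩⟩, fun y => Subtype.ext y.2⟩
  let e : q ⊕ r ≃ κ := Equiv.sumCompl _
  let N : Matrix (q ⊕ r) (q ⊕ r) ℝ :=
    Matrix.fromBlocks (Matrix.of fun _ _ => c) (Matrix.of fun _ j => g j.1)
      (Matrix.of fun i _ => g i.1) (a • 1)
  have hsub : M.submatrix e e = N := by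
    ext x y
    rcases x with x | x <;> rcases y with y | y
    · show (if (x:κ) = p then (if (y:κ) = p then c else g y) else if (y:κ) = p then g x
        else if (x:κ) = (y:κ) then a else 0) = c
      rw [if_pos x.2, if_pos y.2]
    · show (if (x:κ) = p then (if (y:κ) = p then c else g y) else if (y:κ) = p then g x
        else if (x:κ) = (y:κ) then a else 0) = g y.1
      rw [if_pos x.2, if_neg y.2]
    · show (if (x:κ) = p then (if (y:κ) = p then c else g y) else if (y:κ) = p then g x
        else if (x:κ) = (y:κ) then a else 0) = g x.1
      rw [if_neg x.2, if_pos y.2]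
    · show (if (x:κ) = p then (if (y:κ) = p then c else g y) else if (y:κ) = p then g x
        else if (x:κ) = (y:κ) then a else 0) = (a • (1 : Matrix r r ℝ)) x y
      rw [if_neg x.2, if_neg y.2, Matrix.smul_apply, Matrix.one_apply]
      by_cases hxy : (x : κ) = y
      · rw [if_pos hxy, if_pos (Subtype.ext hxy)]; simp
      · rw [if_neg hxy, if_neg (fun hh => hxy (congrArg Subtype.val hh))]; simp
  have hdet : M.det = N.det := by rw [← hsub, Matrix.det_submatrix_equiv_self]
  haveI : Invertible (a • (1 : Matrix r r ℝ)) := by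
    apply Matrix.invertibleOfIsUnitDet
    rw [Matrix.det_smul, Matrix.det_one, mul_one]
    exact (isUnit_iff_ne_zero.2 (pow_ne_zero _ ha))
  have hinv : (a • (1 : Matrix r r ℝ))⁻¹ = a⁻¹ • 1 := by
    apply Matrix.inv_eq_right_inv
    rw [Matrix.smul_mul, Matrix.mul_smul, one_mul, smul_smul, mul_inv_cancel₀ ha, one_smul]
  have hcr : Fintype.card r = Fintype.card κ - 1 := by
    show Fintype.card {x : κ // ¬ x = p} = Fintype.card κ - 1
    rw [Fintype.card_subtype_compl, Fintype.card_subtype_eq]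
  have hsum : ∑ j : r, g j.1 ^ 2 = ∑ x, g x ^ 2 := by
    have h1 : ∑ y : q ⊕ r, g (e y) ^ 2 = ∑ x, g x ^ 2 := Equiv.sum_comp e (fun x => g x ^ 2)
    rw [Fintype.sum_sum_type] at h1
    have h2 : ∑ i : q, g (e (Sum.inl i)) ^ 2 = 0 := by
      apply Finset.sum_eq_zero
      rintro ⟨x, rfl⟩ _
      show g x ^ 2 = 0
      rw [hgp]; ring
    rw [h2, zero_add] at h1
    exact h1
  rw [hdet, Matrix.det_fromBlocks₂₂, Matrix.invOf_eq_nonsing_inv, hinv]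
  have hBDC : (Matrix.of fun (_ : q) (j : r) => g j.1) * (a⁻¹ • (1 : Matrix r r ℝ))
      * (Matrix.of fun (i : r) (_ : q) => g i.1)
      = Matrix.of fun (_ : q) (_ : q) => a⁻¹ * ∑ j : r, g j.1 ^ 2 := by
    rw [Matrix.mul_smul, Matrix.mul_one]
    ext i j
    rw [Matrix.smul_mul, Matrix.smul_apply, Matrix.mul_apply]
    simp [Finset.mul_sum, sq, mul_assoc]
  rw [hBDC]
  have hdd : ((Matrix.of fun (_ : q) (_ : q) => c) -
      Matrix.of fun (_ : q) (_ : q) => a⁻¹ * ∑ j : r, g j.1 ^ 2).det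
      = c - a⁻¹ * ∑ j : r, g j.1 ^ 2 := by
    rw [Matrix.det_unique]
    simp
  rw [hdd, Matrix.det_smul, Matrix.det_one, mul_one, hcr, hsum]
  have hpow : a ^ (Fintype.card κ - 1) = a ^ (Fintype.card κ - 2) * a := by
    rw [← pow_succ]
    congr 1
    omega
  rw [hpow]
  field_simp
lemma sigma_arrow (m k : ℕ) (hk : 2 ≤ k) (a c : ℝ) (ha : a ≠ 0) (b : Fin m → ℝ) :
    sigmaK k (Matrix.of fun x y : Fin m ⊕ Unit =>
      if x = Sum.inr () then (if y = Sum.inr () then c else Sum.elim b (fun _ => 0) y)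
      else if y = Sum.inr () then Sum.elim b (fun _ => 0) x else if x = y then a else 0)
    = (m.choose k) * a ^ k + (m.choose (k-1)) * a^(k-1) * c
      - ((m-1).choose (k-2)) * a^(k-2) * ∑ i, (b i)^2 := by
  classical
  set ι := Fin m ⊕ Unit
  set bE : ι → ℝ := Sum.elim b (fun _ => 0) with hbE
  set M : Matrix ι ι ℝ := Matrix.of fun x y : ι =>
      if x = Sum.inr () then (if y = Sum.inr () then c else bE y)
      else if y = Sum.inr () then bE x else if x = y then a else 0 with hMdef
  have hcard_univ : ((Finset.univ : Finset ι).erase (Sum.inr ())).card = m := by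
    rw [Finset.card_erase_of_mem (Finset.mem_univ _), Finset.card_univ]
    simp [ι]
  rw [sigmaK, ← Finset.sum_filter_add_sum_filter_not ((Finset.univ : Finset ι).powersetCard k)
    (fun s => Sum.inr () ∈ s)]
  -- Part 2 : subsets avoiding the special index
  have part2 : ∑ s ∈ ((Finset.univ : Finset ι).powersetCard k).filter
      (fun s => ¬ Sum.inr () ∈ s),
      Matrix.det (fun i j : {x : ι // x ∈ s} => M i.1 j.1) = (m.choose k) * a ^ k := by
    have hdiag : ∀ s ∈ ((Finset.univ : Finset ι).powersetCard k).filter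
        (fun s => ¬ Sum.inr () ∈ s),
        Matrix.det (fun i j : {x : ι // x ∈ s} => M i.1 j.1) = a ^ k := by
      intro s hs
      rw [Finset.mem_filter, Finset.mem_powersetCard] at hs
      have heq : (fun i j : {x : ι // x ∈ s} => M i.1 j.1)
          = Matrix.diagonal (fun _ => a) := by
        funext i j
        have hi : (i.1 : ι) ≠ Sum.inr () := fun hh => hs.2 (hh ▸ i.2)
        have hj : (j.1 : ι) ≠ Sum.inr () := fun hh => hs.2 (hh ▸ j.2)
        show (if i.1 = Sum.inr () then (if j.1 = Sum.inr () then c else bE j.1)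
          else if j.1 = Sum.inr () then bE i.1 else if i.1 = j.1 then a else 0)
          = Matrix.diagonal (fun _ => a) i j
        rw [if_neg hi, if_neg hj, Matrix.diagonal_apply]
        by_cases hij : (i.1 : ι) = j.1
        · rw [if_pos hij, if_pos (Subtype.ext hij)]
        · rw [if_neg hij, if_neg (fun hh => hij (congrArg Subtype.val hh))]
      rw [heq, Matrix.det_diagonal, Finset.prod_const, Finset.card_univ, Fintype.card_coe,
        hs.1.2]
    rw [Finset.sum_congr rfl hdiag, Finset.sum_const, nsmul_eq_mul]
    congr 1
    have hfe : ((Finset.univ : Finset ι).powersetCard k).filter (fun s => ¬ Sum.inr () ∈ s)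
        = ((Finset.univ : Finset ι).erase (Sum.inr ())).powersetCard k := by
      ext s
      simp only [Finset.mem_filter, Finset.mem_powersetCard, Finset.subset_erase,
        Finset.subset_univ, true_and, and_comm]
    rw [hfe, Finset.card_powersetCard, hcard_univ]
  rw [part2]
  -- Part 1 : subsets containing the special index
  have key : ∀ s ∈ ((Finset.univ : Finset ι).powersetCard k).filter (fun s => Sum.inr () ∈ s),
      Matrix.det (fun i j : {x : ι // x ∈ s} => M i.1 j.1)
        = a ^ (k-1) * c - a ^ (k-2) * ∑ x ∈ s.erase (Sum.inr ()), (bE x)^2 := by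
    intro s hs
    rw [Finset.mem_filter, Finset.mem_powersetCard] at hs
    have hkcard : Fintype.card {x : ι // x ∈ s} = k := by
      rw [Fintype.card_coe, hs.1.2]
    have := det_arrow (κ := {x : ι // x ∈ s}) ⟨Sum.inr (), hs.2⟩ a c ha
      (by rw [hkcard]; exact hk) (fun x => bE x.1) (by simp [hbE])
    have heq : (fun i j : {x : ι // x ∈ s} => M i.1 j.1)
        = Matrix.of fun x y : {x : ι // x ∈ s} =>
          if x = ⟨Sum.inr (), hs.2⟩ then (if y = ⟨Sum.inr (), hs.2⟩ then c else bE y.1)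
          else if y = ⟨Sum.inr (), hs.2⟩ then bE x.1 else if x = y then a else 0 := by
      funext i j
      show (if i.1 = Sum.inr () then (if j.1 = Sum.inr () then c else bE j.1)
          else if j.1 = Sum.inr () then bE i.1 else if i.1 = j.1 then a else 0) = _
      have e1 : (i = (⟨Sum.inr (), hs.2⟩ : {x : ι // x ∈ s})) ↔ i.1 = Sum.inr () :=
        ⟨fun hh => congrArg Subtype.val hh, fun hh => Subtype.ext hh⟩
      have e2 : (j = (⟨Sum.inr (), hs.2⟩ : {x : ι // x ∈ s})) ↔ j.1 = Sum.inr () :=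
        ⟨fun hh => congrArg Subtype.val hh, fun hh => Subtype.ext hh⟩
      have e3 : (i = j) ↔ i.1 = j.1 := Subtype.ext_iff
      simp only [Matrix.of_apply, ← e1, ← e2, ← e3]
    rw [heq, this, hkcard]
    congr 1
    have hsum1 : ∑ x : {x : ι // x ∈ s}, (bE x.1)^2 = ∑ x ∈ s, (bE x)^2 := by
      exact Finset.sum_coe_sort s (fun x => (bE x)^2)
    have hsum2 : ∑ x ∈ s, (bE x)^2 = ∑ x ∈ s.erase (Sum.inr ()), (bE x)^2 := by
      rw [← Finset.sum_erase_add s _ hs.2]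
      simp [hbE]
    rw [hsum1, hsum2]
  rw [Finset.sum_congr rfl key]
  have hbij : ∑ s ∈ ((Finset.univ : Finset ι).powersetCard k).filter
      (fun s => Sum.inr () ∈ s),
      (a ^ (k-1) * c - a ^ (k-2) * ∑ x ∈ s.erase (Sum.inr ()), (bE x)^2)
      = ∑ T ∈ ((Finset.univ : Finset ι).erase (Sum.inr ())).powersetCard (k-1),
      (a ^ (k-1) * c - a ^ (k-2) * ∑ x ∈ T, (bE x)^2) := by
    refine Finset.sum_bij' (fun s _ => s.erase (Sum.inr ()))
      (fun T _ => insert (Sum.inr ()) T) ?_ ?_ ?_ ?_ ?_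
    · intro s hs
      have hs' : (s ⊆ Finset.univ ∧ s.card = k) ∧ Sum.inr () ∈ s := by
        simpa [Finset.mem_powersetCard] using hs
      simp only [Finset.mem_powersetCard, Finset.subset_erase]
      exact ⟨⟨Finset.subset_univ _, Finset.notMem_erase _ _⟩,
        by rw [Finset.card_erase_of_mem hs'.2, hs'.1.2]⟩
    · intro T hT
      have hT' : (T ⊆ Finset.univ.erase (Sum.inr ())) ∧ T.card = k - 1 := by
        simpa [Finset.mem_powersetCard] using hT
      have hnT : Sum.inr () ∉ T := fun hh => Finset.notMem_erase _ _ (hT'.1 hh)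
      simp only [Finset.mem_filter, Finset.mem_powersetCard]
      refine ⟨⟨Finset.subset_univ _, ?_⟩, Finset.mem_insert_self _ _⟩
      rw [Finset.card_insert_of_notMem hnT, hT'.2]
      omega
    · intro s hs
      have hs' : (s ⊆ Finset.univ ∧ s.card = k) ∧ Sum.inr () ∈ s := by
        simpa [Finset.mem_powersetCard] using hs
      exact Finset.insert_erase hs'.2
    · intro T hT
      have hT' : (T ⊆ Finset.univ.erase (Sum.inr ())) ∧ T.card = k - 1 := by
        simpa [Finset.mem_powersetCard] using hT
      exact Finset.erase_insert (fun hh => Finset.notMem_erase _ _ (hT'.1 hh))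
    · intro s hs
      rfl
  rw [hbij, Finset.sum_sub_distrib, Finset.sum_const, Finset.card_powersetCard, hcard_univ,
    ← Finset.mul_sum]
  have hk1 : k - 1 = (k-2) + 1 := by omega
  rw [hk1, aux_sum_powersetCard, hcard_univ]
  have hsum3 : ∑ x ∈ (Finset.univ : Finset ι).erase (Sum.inr ()), (bE x)^2
      = ∑ i, (b i)^2 := by
    rw [Finset.sum_erase _ (by simp [hbE])]
    have : ∑ x : ι, (bE x)^2 = ∑ i, (b i)^2 := by
      rw [Fintype.sum_sum_type]
      simp [hbE]
    exact this
  rw [hsum3, nsmul_eq_mul]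
  ring
section hess

variable (m : ℕ)

noncomputable abbrev pr (j : Fin m ⊕ Unit) : ((Fin m ⊕ Unit → ℝ)) →L[ℝ] ℝ :=
  ContinuousLinearMap.proj j

lemma hasFDerivAt_sq (m : ℕ) (i : Fin m) (w : Fin m ⊕ Unit → ℝ) :
    HasFDerivAt (fun y : Fin m ⊕ Unit → ℝ => y (Sum.inl i) ^ 2)
      ((2 * w (Sum.inl i)) • pr m (Sum.inl i)) w := by
  have h0 := ((pr m (Sum.inl i)).hasFDerivAt (x := w)).mul
    ((pr m (Sum.inl i)).hasFDerivAt (x := w))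
  have heq : (fun y : Fin m ⊕ Unit → ℝ => y (Sum.inl i) ^ 2)
      = fun y => y (Sum.inl i) * y (Sum.inl i) := by funext y; ring
  rw [heq, two_mul, add_smul]
  exact h0

lemma hessian_eq (h : ℝ → ℝ) (hd1 : ∀ t, DifferentiableAt ℝ h t)
    (hd2 : ∀ t, DifferentiableAt ℝ (deriv h) t) (v : Fin m ⊕ Unit → ℝ) :
    hessian (fun y : Fin m ⊕ Unit → ℝ =>
      (∑ i : Fin m, y (Sum.inl i) ^ 2) * Real.exp (y (Sum.inr ())) + h (y (Sum.inr ()))) v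
    = Matrix.of fun x y : Fin m ⊕ Unit =>
      if x = Sum.inr () then
        (if y = Sum.inr () then
          (∑ i : Fin m, v (Sum.inl i) ^ 2) * Real.exp (v (Sum.inr ()))
            + deriv (deriv h) (v (Sum.inr ()))
        else Sum.elim (fun i => 2 * v (Sum.inl i) * Real.exp (v (Sum.inr ()))) (fun _ => 0) y)
      else if y = Sum.inr () then
        Sum.elim (fun i => 2 * v (Sum.inl i) * Real.exp (v (Sum.inr ()))) (fun _ => 0) x
      else if x = y then 2 * Real.exp (v (Sum.inr ())) else 0 := by
  classical
  set u : (Fin m ⊕ Unit → ℝ) → ℝ := fun y =>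
    (∑ i : Fin m, y (Sum.inl i) ^ 2) * Real.exp (y (Sum.inr ())) + h (y (Sum.inr ())) with hu
  -- first derivative
  have hud : ∀ w : Fin m ⊕ Unit → ℝ, HasFDerivAt u
      (((∑ i : Fin m, w (Sum.inl i) ^ 2) • (Real.exp (w (Sum.inr ())) • pr m (Sum.inr ())) +
        Real.exp (w (Sum.inr ())) •
          (∑ i : Fin m, (2 * w (Sum.inl i)) • pr m (Sum.inl i))) +
        deriv h (w (Sum.inr ())) • pr m (Sum.inr ())) w := by
    intro w
    apply HasFDerivAt.add
    · exact (HasFDerivAt.fun_sum (fun i _ => hasFDerivAt_sq m i w)).mul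
        ((pr m (Sum.inr ())).hasFDerivAt.exp)
    · exact ((hd1 _).hasDerivAt).comp_hasFDerivAt w (pr m (Sum.inr ())).hasFDerivAt
  have hD1l : ∀ (i0 : Fin m), (fun w : Fin m ⊕ Unit → ℝ => fderiv ℝ u w (Pi.single (Sum.inl i0) 1))
      = fun w => 2 * w (Sum.inl i0) * Real.exp (w (Sum.inr ())) := by
    intro i0
    funext w
    rw [(hud w).fderiv]
    simp [Pi.single_apply, Finset.sum_ite_eq', mul_comm]
  have hD1r : (fun w : Fin m ⊕ Unit → ℝ => fderiv ℝ u w (Pi.single (Sum.inr ()) 1))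
      = fun w => (∑ i : Fin m, w (Sum.inl i) ^ 2) * Real.exp (w (Sum.inr ()))
          + deriv h (w (Sum.inr ())) := by
    funext w
    rw [(hud w).fderiv]
    simp [Pi.single_apply]
  -- second derivatives
  funext x y
  rcases y with y | y
  · -- column y = inl y
    show fderiv ℝ (fun w => fderiv ℝ u w (Pi.single (Sum.inl y) 1)) v (Pi.single x 1) = _
    rw [hD1l y]
    have hd : HasFDerivAt (fun w : Fin m ⊕ Unit → ℝ =>
        2 * w (Sum.inl y) * Real.exp (w (Sum.inr ())))
        ((2 * v (Sum.inl y)) • (Real.exp (v (Sum.inr ())) • pr m (Sum.inr ())) +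
          Real.exp (v (Sum.inr ())) • ((2:ℝ) • pr m (Sum.inl y))) v := by
      exact ((pr m (Sum.inl y)).hasFDerivAt.const_mul 2).mul
        ((pr m (Sum.inr ())).hasFDerivAt.exp)
    rw [hd.fderiv]
    rcases x with x | x
    · simp only [Matrix.of_apply, Sum.elim_inl]
      by_cases hxy : x = y
      · subst hxy
        simp [Pi.single_apply]
        ring
      · simp [Pi.single_apply, hxy, Sum.inl.injEq, (Sum.inl_injective.ne_iff).2 hxy]
    · simp [Pi.single_apply, mul_comm]
  · -- column y = inr ()
    show fderiv ℝ (fun w => fderiv ℝ u w (Pi.single (Sum.inr ()) 1)) v (Pi.single x 1) = _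
    rw [hD1r]
    have hd : HasFDerivAt (fun w : Fin m ⊕ Unit → ℝ =>
        (∑ i : Fin m, w (Sum.inl i) ^ 2) * Real.exp (w (Sum.inr ()))
          + deriv h (w (Sum.inr ())))
        (((∑ i : Fin m, v (Sum.inl i) ^ 2) • (Real.exp (v (Sum.inr ())) • pr m (Sum.inr ())) +
          Real.exp (v (Sum.inr ())) •
            (∑ i : Fin m, (2 * v (Sum.inl i)) • pr m (Sum.inl i))) +
          deriv (deriv h) (v (Sum.inr ())) • pr m (Sum.inr ())) v := by
      apply HasFDerivAt.add
      · exact (HasFDerivAt.fun_sum (fun i _ => hasFDerivAt_sq m i v)).mul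
          ((pr m (Sum.inr ())).hasFDerivAt.exp)
      · exact ((hd2 _).hasDerivAt).comp_hasFDerivAt v (pr m (Sum.inr ())).hasFDerivAt
    rw [hd.fderiv]
    rcases x with x | x
    · simp [Pi.single_apply, Finset.sum_ite_eq', mul_comm]
    · simp [Pi.single_apply]

end hess

/-- For odd `n ≥ 3`, `k = (n+1)/2`, and any twice differentiable `h : ℝ → ℝ` with
`h''(t) = (1 − B e^{kt})/(A e^{(k−1)t})`, the function `u(x,t) = |x|² eᵗ + h(t)`
on `ℝ^{n-1} × ℝ` solves `σ_k(D²u) = 1`. -/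
theorem solution_sigmaK_of_ode (n k : ℕ) (hn : 3 ≤ n) (hodd : Odd n)
    (hk : k = (n + 1) / 2) (A B : ℝ)
    (hA : A = 2 ^ (k - 1) * (((n - 2).choose (k - 2) : ℝ) + ((n - 2).choose (k - 1) : ℝ)))
    (hB : B = 2 ^ k * ((n - 1).choose k : ℝ))
    (h : ℝ → ℝ)
    (hd1 : ∀ t, DifferentiableAt ℝ h t)
    (hd2 : ∀ t, DifferentiableAt ℝ (deriv h) t)
    (hODE : ∀ t, deriv (deriv h) t
      = (1 - B * Real.exp (k * t)) / (A * Real.exp (((k : ℝ) - 1) * t)))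
    (u : (Fin (n - 1) ⊕ Unit → ℝ) → ℝ)
    (hu : u = fun v => (∑ i : Fin (n - 1), v (Sum.inl i) ^ 2) * Real.exp (v (Sum.inr ()))
      + h (v (Sum.inr ()))) :
    ∀ v, sigmaK k (hessian u v) = 1 := by
  intro v
  obtain ⟨l, hl⟩ := hodd
  have hl1 : 1 ≤ l := by omega
  set j := l - 1 with hjdef
  have hn' : n = 2 * j + 3 := by omega
  have hk' : k = j + 2 := by omega
  set t := v (Sum.inr ()) with ht
  set E := Real.exp t with hE
  have hE0 : 0 < E := Real.exp_pos t
  set r := ∑ i : Fin (n-1), v (Sum.inl i) ^ 2 with hr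
  set b : Fin (n-1) → ℝ := fun i => 2 * v (Sum.inl i) * E with hb
  set c : ℝ := r * E + deriv (deriv h) t with hc
  have ha : (2 : ℝ) * E ≠ 0 := by positivity
  subst hu
  rw [hessian_eq (n-1) h hd1 hd2 v]
  rw [show (Matrix.of fun x y : Fin (n-1) ⊕ Unit =>
      if x = Sum.inr () then
        (if y = Sum.inr () then r * E + deriv (deriv h) t
        else Sum.elim (fun i => 2 * v (Sum.inl i) * E) (fun _ => 0) y)
      else if y = Sum.inr () then
        Sum.elim (fun i => 2 * v (Sum.inl i) * E) (fun _ => 0) x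
      else if x = y then 2 * E else 0)
    = (Matrix.of fun x y : Fin (n-1) ⊕ Unit =>
      if x = Sum.inr () then (if y = Sum.inr () then c else Sum.elim b (fun _ => 0) y)
      else if y = Sum.inr () then Sum.elim b (fun _ => 0) x
      else if x = y then (2*E) else 0) from rfl]
  rw [sigma_arrow (n-1) k (by omega) (2*E) c ha b]
  -- numerical rewrites
  have hsumb : ∑ i, (b i)^2 = 4 * E^2 * r := by
    rw [hb, hr, Finset.mul_sum]
    exact Finset.sum_congr rfl fun i _ => by ring
  have c1 : (n-1).choose k = (2*j+2).choose (j+2) := by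
    rw [show n-1 = 2*j+2 by omega, hk']
  have c2 : (n-1).choose (k-1) = 2 * (2*j+1).choose j := by
    rw [show n-1 = 2*j+2 by omega, show k-1 = j+1 by omega]
    have p1 : (2*j+2).choose (j+1) = (2*j+1).choose j + (2*j+1).choose (j+1) := by
      rw [show 2*j+2 = (2*j+1)+1 by omega]
      exact Nat.choose_succ_succ (2*j+1) j
    have p2 : (2*j+1).choose (j+1) = (2*j+1).choose j := by
      rw [← Nat.choose_symm (show j+1 ≤ 2*j+1 by omega)]
      congr 1
      omega
    omega
  have c3 : (n-1-1).choose (k-2) = (2*j+1).choose j := by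
    rw [show n-1-1 = 2*j+1 by omega, show k-2 = j by omega]
  have hAval : A = 2^(j+2) * ((2*j+1).choose j : ℝ) := by
    rw [hA, show k-1 = j+1 by omega, show n-2 = 2*j+1 by omega, show k-2 = j by omega]
    have p2 : (2*j+1).choose (j+1) = (2*j+1).choose j := by
      rw [← Nat.choose_symm (show j+1 ≤ 2*j+1 by omega)]
      congr 1
      omega
    rw [p2]
    ring
  have hBval : B = 2^(j+2) * ((2*j+2).choose (j+2) : ℝ) := by
    rw [hB, hk', show n-1 = 2*j+2 by omega]
  have hA0 : A ≠ 0 := by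
    rw [hAval]
    have := Nat.choose_pos (show j ≤ 2*j+1 by omega)
    positivity
  have hder2 : deriv (deriv h) t = (1 - B * E^(j+2)) / (A * E^(j+1)) := by
    rw [hODE t, hk']
    rw [show ((j+2 : ℕ) : ℝ) * t = ((j+2 : ℕ) : ℝ) * t from rfl]
    rw [show (((j+2 : ℕ) : ℝ)) - 1 = ((j+1 : ℕ) : ℝ) by push_cast; ring]
    rw [Real.exp_nat_mul, Real.exp_nat_mul, ← hE]
  rw [hsumb, c1, c2, c3, hc, hder2, hAval, hBval]
  have hEj1 : A * E^(j+1) ≠ 0 := mul_ne_zero hA0 (pow_ne_zero _ hE0.ne')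
  have hch : (0:ℝ) < ((2*j+1).choose j : ℝ) := by
    exact_mod_cast Nat.choose_pos (show j ≤ 2*j+1 by omega)
  rw [hk']
  push_cast
  field_simp
  ring
end
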